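/- Let Θ = [F₁^T, …, F_M^T]^T ∈ ℂ^{MN×(M−1)} where F_t = c_t·Q·[φ_{2,t},…,φ_{M,t}] with c_t ≠ 0, Q ∈ ℂ^{N×M} of rank q ≥ 1, and for each t the vectors φ_{2,t},…,φ_{M,t} ∈ ℂ^M are linearly independent. Then there exists a choice of the vectors φ_{m,t} (forming columns of unitary matrices) such that rank(Θ) = M − 1. -/

import Mathlib

open Matrix

/-- There exist unitary BD-RIS scattering matrices (whose columns `2,…,M` give the
vectors `φ_{m,t}`) such that the stacked matrix `Θ = [F₁ᵀ,…,F_Mᵀ]ᵀ`,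
with `F_t = c_t • Q [φ_{2,t},…,φ_{M,t}]`, has rank `M - 1`. -/
theorem stmt_9 (N M q : ℕ) (hM : 0 < M) (hq : 1 ≤ q)
    (Q : Matrix (Fin N) (Fin M) ℂ) (hQ : Q.rank = q)
    (c : Fin M → ℂ) (hc : ∀ t, c t ≠ 0) :
    ∃ Φ : Fin M → Matrix (Fin M) (Fin M) ℂ,
      (∀ t, (Φ t)ᴴ * Φ t = 1) ∧ (∀ t, Φ t * (Φ t)ᴴ = 1) ∧
      (Matrix.of fun (p : Fin M × Fin N) (j : Fin (M - 1)) =>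
        (c p.1 • (Q * Matrix.of (fun i (j' : Fin (M - 1)) =>
          Φ p.1 i ⟨j'.1 + 1, by omega⟩))) p.2 j).rank = M - 1 := by
  obtain ⟨M', rfl⟩ := Nat.exists_eq_succ_of_ne_zero hM.ne'
  -- Q ≠ 0 since rank ≥ 1
  have hQ0 : Q ≠ 0 := by
    rintro rfl
    rw [Matrix.rank_zero] at hQ
    omega
  -- pick a nonzero row n of Q
  obtain ⟨n, hn⟩ : ∃ n, (fun i => star (Q n i)) ≠ (0 : Fin (M' + 1) → ℂ) := by
    by_contra h
    push_neg at h
    apply hQ0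
    ext n i
    have := congrFun (h n) i
    simpa using this
  -- the unit vector u in the row space of Q
  set u0 : EuclideanSpace ℂ (Fin (M' + 1)) := WithLp.toLp 2 (fun i => star (Q n i)) with hu0
  have hu0ne : u0 ≠ 0 := fun h => hn (by simpa [hu0] using congrArg WithLp.ofLp h)
  set cn : ℂ := (‖u0‖ : ℂ)⁻¹ with hcn
  set u : EuclideanSpace ℂ (Fin (M' + 1)) := cn • u0 with hudef
  have hnorm : ‖u‖ = 1 := by
    rw [hudef, norm_smul, hcn]
    have : ‖u0‖ ≠ 0 := norm_ne_zero_iff.mpr hu0ne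
    simp [this]
  -- orthonormal singleton family
  have hon : Orthonormal ℂ (Set.restrict {(0 : Fin (M' + 1))} (fun _ => u)) := by
    constructor
    · intro i; exact hnorm
    · rintro ⟨i, hi⟩ ⟨j, hj⟩ hij
      exact absurd (Subtype.ext ((hi.trans hj.symm : i = j))) hij
  obtain ⟨b, hb⟩ := hon.exists_orthonormalBasis_extension_of_card_eq
    (by simp [finrank_euclideanSpace])
  have hb0 : b 0 = u := hb 0 rfl
  -- the unitary matrices
  set Φ : Fin (M' + 1) → Matrix (Fin (M' + 1)) (Fin (M' + 1)) ℂ :=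
    fun t => Matrix.of fun i j => b (Equiv.swap t 0 j) i with hΦdef
  have hcolt : ∀ t i, Φ t i t = u i := by
    intro t i
    simp [hΦdef, Equiv.swap_apply_left, hb0]
  have hunit : ∀ t, (Φ t)ᴴ * Φ t = 1 := by
    intro t
    ext j k
    rw [Matrix.mul_apply, Matrix.one_apply]
    have := (orthonormal_iff_ite.mp b.orthonormal) (Equiv.swap t 0 j) (Equiv.swap t 0 k)
    rw [PiLp.inner_apply] at this
    simp only [RCLike.inner_apply] at this
    have heq : ∑ i, (Φ t)ᴴ j i * Φ t i k
        = ∑ i, (starRingEnd ℂ) (b (Equiv.swap t 0 j) i) * b (Equiv.swap t 0 k) i := by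
      apply Finset.sum_congr rfl
      intro i _
      simp [hΦdef, Matrix.conjTranspose_apply]
    rw [heq]
    simp only [mul_comm] at this ⊢
    rw [this]
    simp [Equiv.apply_eq_iff_eq, eq_comm]
  have hunit' : ∀ t, Φ t * (Φ t)ᴴ = 1 := fun t => mul_eq_one_comm.mp (hunit t)
  refine ⟨Φ, hunit, hunit', ?_⟩
  -- the stacked matrix
  set A : Matrix (Fin (M' + 1) × Fin N) (Fin (M' + 1 - 1)) ℂ :=
    Matrix.of fun (p : Fin (M' + 1) × Fin N) (j : Fin (M' + 1 - 1)) =>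
      (c p.1 • (Q * Matrix.of (fun i (j' : Fin (M' + 1 - 1)) =>
        Φ p.1 i ⟨j'.1 + 1, by omega⟩))) p.2 j with hAdef
  -- injectivity of mulVecLin A
  have hker : ∀ x : Fin (M' + 1 - 1) → ℂ, A.mulVec x = 0 → x = 0 := by
    intro x hx
    -- z = (0, x)
    set z : Fin (M' + 1) → ℂ := Fin.cases 0 (fun j => x j) with hz
    have hzt : ∀ t, z t = 0 := by
      intro t
      -- Q * (Φ t *ᵥ z) = 0
      have hQv : Q.mulVec ((Φ t).mulVec z) = 0 := by
        funext n'
        have hx' := congrFun hx (t, n')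
        simp only [hAdef, Matrix.mulVec, dotProduct, Matrix.of_apply, Matrix.smul_apply,
          smul_eq_mul, Pi.zero_apply, Matrix.mul_apply] at hx' ⊢
        have hx'' : ∑ j : Fin (M' + 1 - 1), (∑ i, Q n' i * Φ t i ⟨j.1 + 1, by omega⟩) * x j
            = 0 := by
          have hfac : ∑ j : Fin (M' + 1 - 1),
                (c t * ∑ i, Q n' i * Φ t i ⟨j.1 + 1, by omega⟩) * x j
              = c t * ∑ j : Fin (M' + 1 - 1),
                (∑ i, Q n' i * Φ t i ⟨j.1 + 1, by omega⟩) * x j := by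
            rw [Finset.mul_sum]
            exact Finset.sum_congr rfl fun j _ => by ring
          rw [hfac] at hx'
          exact (mul_eq_zero.mp hx').resolve_left (hc t)
        have hinner : ∀ i, ∑ k, Φ t i k * z k
            = ∑ j : Fin (M' + 1 - 1), Φ t i ⟨j.1 + 1, by omega⟩ * x j := by
          intro i
          rw [Fin.sum_univ_succ]
          simp only [hz, Fin.cases_zero, Fin.cases_succ, mul_zero, zero_add]
          rfl
        calc ∑ i, Q n' i * ∑ k, Φ t i k * z k
            = ∑ i, Q n' i * ∑ j : Fin (M' + 1 - 1), Φ t i ⟨j.1 + 1, by omega⟩ * x j :=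
              Finset.sum_congr rfl fun i _ => by rw [hinner i]
          _ = ∑ j : Fin (M' + 1 - 1), (∑ i, Q n' i * Φ t i ⟨j.1 + 1, by omega⟩) * x j := by
              simp only [Finset.mul_sum]
              rw [Finset.sum_comm]
              apply Finset.sum_congr rfl
              intro j _
              rw [Finset.sum_mul]
              apply Finset.sum_congr rfl
              intro i _
              ring
          _ = 0 := hx''
      -- z t = star cn * (Q *ᵥ (Φ t *ᵥ z)) n = 0
      have hzval : z t = ((Φ t)ᴴ.mulVec ((Φ t).mulVec z)) t := by
        rw [Matrix.mulVec_mulVec, hunit t, Matrix.one_mulVec]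
      rw [hzval]
      have : ((Φ t)ᴴ.mulVec ((Φ t).mulVec z)) t
          = star cn * (Q.mulVec ((Φ t).mulVec z)) n := by
        simp only [Matrix.mulVec, dotProduct, Matrix.conjTranspose_apply,
          Finset.mul_sum]
        apply Finset.sum_congr rfl
        intro i _
        have : Φ t i t = cn * star (Q n i) := by rw [hcolt t i, hudef]; rfl
        rw [this]
        simp [mul_comm, mul_assoc, mul_left_comm]
      rw [this, hQv]
      simp
    funext j
    have := hzt j.succ
    simpa [hz] using this
  have hinj : Function.Injective A.mulVecLin := by
    rw [← LinearMap.ker_eq_bot]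
    exact LinearMap.ker_eq_bot'.mpr (fun m hm => hker m hm)
  have : A.rank = M' + 1 - 1 := by
    rw [Matrix.rank, LinearMap.finrank_range_of_inj hinj, Module.finrank_fin_fun]
  exact this
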